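/- Let (A, m) be a noetherian local ring, T ∈ ℕⁿ nonzero, and G a power series over A with all coefficients in m. Then A⟦X₁,…,Xₙ⟧/(X^T − G) is flat as an A-module. -/

import Mathlib

open MvPowerSeries TensorProduct LinearMap

section PiFlat

variable (R : Type*) [CommRing R] (ι : Type*)

/-- Flip of a doubly-indexed family, as a linear equivalence. -/
def piFlipEquiv (κ : Type*) : (κ → ι → R) ≃ₗ[R] (ι → κ → R) where
  toFun g := fun j k => g k j
  invFun g := fun k j => g j k
  map_add' _ _ := rfl
  map_smul' _ _ := rfl
  left_inv _ := rfl
  right_inv _ := rfl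

lemma piScalarRightHom_natural {N N' : Type*} [AddCommGroup N] [Module R N]
    [AddCommGroup N'] [Module R N'] (h : N →ₗ[R] N') :
    (h.compLeft ι) ∘ₗ piScalarRightHom R R N ι
      = piScalarRightHom R R N' ι ∘ₗ (h.rTensor (ι → R)) := by
  apply TensorProduct.ext'
  intro x f
  funext j
  simp

lemma piScalarRightHom_bijective_free (κ : Type*) [Fintype κ] [DecidableEq κ] :
    Function.Bijective (piScalarRightHom R R (κ → R) ι) := by
  let e : (κ → R) ⊗[R] (ι → R) ≃ₗ[R] (ι → κ → R) :=
    (TensorProduct.comm R _ _).trans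
      (((TensorProduct.piRight R R (ι → R) (fun _ : κ => R)).trans
        (LinearEquiv.piCongrRight (fun _ => TensorProduct.rid R (ι → R)))).trans
          (piFlipEquiv R ι κ))
  have he : (piScalarRightHom R R (κ → R) ι) = (e : _ →ₗ[R] _) := by
    apply TensorProduct.ext'
    intro x f
    funext j k
    simp [e, piFlipEquiv, mul_comm]
  rw [he]
  exact e.bijective

lemma piScalarRightHom_injective_of_pres {N : Type*} [AddCommGroup N] [Module R N]
    {κ κ' : Type*} [Fintype κ] [DecidableEq κ] [Fintype κ'] [DecidableEq κ']
    (p : (κ → R) →ₗ[R] N) (hp : Function.Surjective p)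
    (g : (κ' → R) →ₗ[R] (κ → R)) (hg : range g = ker p) :
    Function.Injective (piScalarRightHom R R N ι) := by
  rw [← LinearMap.ker_eq_bot, LinearMap.ker_eq_bot']
  intro x hx
  obtain ⟨y, rfl⟩ := LinearMap.rTensor_surjective (ι → R) (g := p) hp x
  set φκ := piScalarRightHom R R (κ → R) ι
  set Y : ι → (κ → R) := φκ y with hY
  have hpY : ∀ j, p (Y j) = 0 := by
    intro j
    have h1 : (p.compLeft ι) (φκ y) = piScalarRightHom R R N ι (p.rTensor (ι → R) y) :=
      LinearMap.congr_fun (piScalarRightHom_natural R ι p) y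
    have := congrFun (h1.trans hx) j
    simpa using this
  have hker : ∀ j, Y j ∈ range g := by
    intro j; rw [hg]; exact hpY j
  choose Z hZ using hker
  obtain ⟨z, hz⟩ := (piScalarRightHom_bijective_free R ι κ').surjective Z
  have h2 : φκ (g.rTensor (ι → R) z) = Y := by
    have h1 : (g.compLeft ι) (piScalarRightHom R R (κ' → R) ι z)
        = φκ (g.rTensor (ι → R) z) :=
      LinearMap.congr_fun (piScalarRightHom_natural R ι g) z
    rw [← h1, hz]
    funext j
    exact hZ j
  have hyz : g.rTensor (ι → R) z = y := (piScalarRightHom_bijective_free R ι κ).injective h2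
  have hpg : p ∘ₗ g = 0 := by
    apply LinearMap.ext
    intro w
    have : g w ∈ ker p := by rw [← hg]; exact ⟨_, rfl⟩
    simpa using this
  rw [← hyz, ← LinearMap.rTensor_comp_apply, hpg]
  simp

theorem flat_pi_of_noetherian [IsNoetherianRing R] : Module.Flat R (ι → R) := by
  classical
  rw [Module.Flat.iff_lift_lsmul_comp_subtype_injective]
  intro I hI
  haveI : Module.Finite R I := Module.Finite.iff_fg.mpr hI
  obtain ⟨k, p, hp⟩ := Module.Finite.exists_fin' R I
  obtain ⟨S, hS⟩ := IsNoetherian.noetherian (LinearMap.ker p)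
  let g : (↥S → R) →ₗ[R] (Fin k → R) :=
    Fintype.linearCombination R (fun x : ↥S => (x : Fin k → R))
  have hg : range g = ker p := by
    rw [show range g = Submodule.span R (Set.range (fun x : ↥S => (x : Fin k → R)))
        from Fintype.range_linearCombination R _, ← hS]
    congr 1
    ext v
    simp
  have hinj := piScalarRightHom_injective_of_pres R ι p hp g hg
  have heq : TensorProduct.lift ((lsmul R (ι → R)).comp I.subtype)
      = (I.subtype.compLeft ι) ∘ₗ piScalarRightHom R R I ι := by
    apply TensorProduct.ext'
    intro x f
    funext j
    simp [mul_comm]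
  rw [heq, LinearMap.coe_comp]
  refine Function.Injective.comp ?_ hinj
  intro a b hab
  funext j
  exact Subtype.ext (congrFun hab j)

end PiFlat

section PS

variable {A : Type*} [CommRing A] {σ : Type*}

lemma prod_monomial_one {ι : Type*} (s : Finset ι) (d : ι → (σ →₀ ℕ)) :
    (∏ i ∈ s, MvPowerSeries.monomial (R := A) (d i) 1) = MvPowerSeries.monomial (R := A) (∑ i ∈ s, d i) 1 := by
  classical
  induction s using Finset.cons_induction with
  | empty => simp
  | cons a s ha ih =>
      rw [Finset.prod_cons, ih, Finset.sum_cons, MvPowerSeries.monomial_mul_monomial, one_mul]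

lemma coeff_mem_of_mem_smul_top (I : Ideal A) (b : MvPowerSeries σ A)
    (h : b ∈ I • (⊤ : Submodule A (MvPowerSeries σ A))) (d : σ →₀ ℕ) :
    MvPowerSeries.coeff d b ∈ I := by
  refine Submodule.smul_induction_on h (fun r hr x _ => ?_) (fun x y hx hy => ?_)
  · rw [MvPowerSeries.coeff_smul]
    exact I.mul_mem_right _ hr
  · rw [map_add]
    exact I.add_mem hx hy

lemma mem_smul_top_of_coeff (I : Ideal A) (hI : I.FG) (b : MvPowerSeries σ A)
    (h : ∀ d, MvPowerSeries.coeff d b ∈ I) :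
    b ∈ I • (⊤ : Submodule A (MvPowerSeries σ A)) := by
  classical
  obtain ⟨S, rfl⟩ := hI
  choose c hc using fun d => Submodule.mem_span_finset.mp (h d)
  have hb : b = ∑ a ∈ S, a • (show MvPowerSeries σ A from fun d => c d a) := by
    ext d
    rw [map_sum, ← (hc d).2]
    apply Finset.sum_congr rfl
    intro a _
    rw [MvPowerSeries.coeff_smul, smul_eq_mul, mul_comm]
    rfl
  rw [hb]
  exact Submodule.sum_mem _ fun a haS =>
    Submodule.smul_mem_smul (Submodule.subset_span haS) Submodule.mem_top

lemma mem_of_mem_sup_pow [IsNoetherianRing A] [IsLocalRing A] {I : Ideal A} {a : A}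
    (h : ∀ k : ℕ, a ∈ I ⊔ (IsLocalRing.maximalIdeal A) ^ k) : a ∈ I := by
  have hb := Ideal.iInf_pow_smul_eq_bot_of_isLocalRing (R := A) (M := A ⧸ I)
    (I := IsLocalRing.maximalIdeal A)
    (Ideal.IsMaximal.ne_top (IsLocalRing.maximalIdeal.isMaximal A))
  have hmem : Ideal.Quotient.mk I a
      ∈ (⨅ k : ℕ, (IsLocalRing.maximalIdeal A) ^ k • ⊤ : Submodule A (A ⧸ I)) := by
    rw [Submodule.mem_iInf]
    intro k
    obtain ⟨i, hi, m, hm, hsum⟩ := Submodule.mem_sup.mp (h k)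
    have h1 : Ideal.Quotient.mk I a = m • (1 : A ⧸ I) := by
      rw [← hsum, map_add, Ideal.Quotient.eq_zero_iff_mem.mpr hi, zero_add,
        ← Ideal.Quotient.algebraMap_eq, Algebra.algebraMap_eq_smul_one]
    rw [h1]
    exact Submodule.smul_mem_smul hm Submodule.mem_top
  rw [hb, Submodule.mem_bot] at hmem
  exact Ideal.Quotient.eq_zero_iff_mem.mp hmem

lemma coeff_mem_of_coeff_mul_mem [IsNoetherianRing A] [IsLocalRing A]
    {G : MvPowerSeries σ A} (hG : ∀ d, MvPowerSeries.coeff d G ∈ IsLocalRing.maximalIdeal A)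
    (Td : σ →₀ ℕ) (I : Ideal A) (b : MvPowerSeries σ A)
    (h : ∀ d, MvPowerSeries.coeff d ((MvPowerSeries.monomial Td 1 - G) * b) ∈ I)
    (d : σ →₀ ℕ) : MvPowerSeries.coeff d b ∈ I := by
  classical
  apply mem_of_mem_sup_pow
  intro k
  induction k generalizing d with
  | zero => simp [pow_zero, Ideal.one_eq_top]
  | succ k ih =>
    have key : MvPowerSeries.coeff d b
        = MvPowerSeries.coeff (Td + d) ((MvPowerSeries.monomial Td 1 - G) * b)
          + MvPowerSeries.coeff (Td + d) (G * b) := by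
      rw [sub_mul, map_sub, MvPowerSeries.coeff_add_monomial_mul, one_mul]
      ring
    rw [key]
    apply Submodule.add_mem
    · exact Submodule.mem_sup_left (h _)
    · rw [MvPowerSeries.coeff_mul]
      apply Submodule.sum_mem
      rintro ⟨u, v⟩ huv
      obtain ⟨i, hi, m, hm, hsum⟩ := Submodule.mem_sup.mp (ih v)
      have h2 : MvPowerSeries.coeff u G * MvPowerSeries.coeff v b
          = MvPowerSeries.coeff u G * i + MvPowerSeries.coeff u G * m := by
        rw [← mul_add, hsum]
      rw [h2]
      apply Submodule.add_mem
      · exact Submodule.mem_sup_left (I.mul_mem_left _ hi)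
      · apply Submodule.mem_sup_right
        rw [pow_succ']
        exact Ideal.mul_mem_mul (hG u) hm

end PS

lemma quotient_flat_aux (A : Type*) [CommRing A] [IsLocalRing A] [IsNoetherianRing A]
    (σ : Type*) (Td : σ →₀ ℕ) (G : MvPowerSeries σ A)
    (hG : ∀ d, MvPowerSeries.coeff d G ∈ IsLocalRing.maximalIdeal A) :
    Module.Flat A
      (MvPowerSeries σ A ⧸ Ideal.span {MvPowerSeries.monomial Td 1 - G}) := by
  classical
  haveI hBflat : Module.Flat A (MvPowerSeries σ A) := flat_pi_of_noetherian A (σ →₀ ℕ)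
  rw [Module.Flat.iff_lift_lsmul_comp_subtype_injective]
  intro I hI
  let f : MvPowerSeries σ A := MvPowerSeries.monomial Td 1 - G
  let J : Ideal (MvPowerSeries σ A) := Ideal.span {MvPowerSeries.monomial Td 1 - G}
  let π : MvPowerSeries σ A →ₗ[A] (MvPowerSeries σ A ⧸ J) := (Ideal.Quotient.mkₐ A J).toLinearMap
  have hπsurj : Function.Surjective π := Ideal.Quotient.mk_surjective
  let μB : (↥I) ⊗[A] MvPowerSeries σ A →ₗ[A] MvPowerSeries σ A :=
    TensorProduct.lift ((lsmul A (MvPowerSeries σ A)).comp I.subtype)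
  let μM : (↥I) ⊗[A] (MvPowerSeries σ A ⧸ J) →ₗ[A] (MvPowerSeries σ A ⧸ J) :=
    TensorProduct.lift ((lsmul A (MvPowerSeries σ A ⧸ J)).comp I.subtype)
  rw [← LinearMap.ker_eq_bot, LinearMap.ker_eq_bot']
  intro t ht
  obtain ⟨s, rfl⟩ := LinearMap.lTensor_surjective (↥I) hπsurj t
  have hnat : μM ∘ₗ π.lTensor (↥I) = π ∘ₗ μB :=
    TensorProduct.ext' fun x b => by simp [μM, μB, π]; exact (map_smul (Ideal.Quotient.mkₐ A J) (x : A) b).symm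
  have h1 : π (μB s) = 0 := by
    have h0 := LinearMap.congr_fun hnat s
    simp only [LinearMap.comp_apply] at h0
    rw [← h0]
    exact ht
  obtain ⟨c, hc⟩ : ∃ c, c * f = μB s := by
    apply Ideal.mem_span_singleton'.mp
    exact Ideal.Quotient.eq_zero_iff_mem.mp h1
  have hμrange : ∀ x : (↥I) ⊗[A] MvPowerSeries σ A,
      μB x ∈ I • (⊤ : Submodule A (MvPowerSeries σ A)) := by
    intro x
    induction x using TensorProduct.induction_on with
    | zero => rw [map_zero]; exact Submodule.zero_mem _
    | tmul x b =>
        simpa [μB] using Submodule.smul_mem_smul x.2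
          (Submodule.mem_top (R := A) (M := MvPowerSeries σ A) (x := b))
    | add x y hx hy => rw [map_add]; exact Submodule.add_mem _ hx hy
  have hcoeffI : ∀ d, MvPowerSeries.coeff d (μB s) ∈ I :=
    coeff_mem_of_mem_smul_top I _ (hμrange s)
  have hcI : ∀ d, MvPowerSeries.coeff d c ∈ I := by
    apply coeff_mem_of_coeff_mul_mem hG Td I c
    intro d
    have heq2 : (MvPowerSeries.monomial Td 1 - G) * c = μB s := by
      rw [show MvPowerSeries.monomial Td 1 - G = f from rfl, mul_comm, hc]
    rw [heq2]
    exact hcoeffI d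
  have hcmem : c ∈ I • (⊤ : Submodule A (MvPowerSeries σ A)) :=
    mem_smul_top_of_coeff I hI c hcI
  obtain ⟨s', hs'⟩ : ∃ s' : (↥I) ⊗[A] MvPowerSeries σ A, μB s' = c := by
    refine Submodule.smul_induction_on hcmem ?_ ?_
    · intro r hr x _
      exact ⟨(⟨r, hr⟩ : ↥I) ⊗ₜ x, by simp [μB]⟩
    · rintro x y ⟨sx, hx⟩ ⟨sy, hy⟩
      exact ⟨sx + sy, by rw [map_add, hx, hy]⟩
  let F : MvPowerSeries σ A →ₗ[A] MvPowerSeries σ A := LinearMap.mulLeft A f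
  have hnat2 : μB ∘ₗ F.lTensor (↥I) = F ∘ₗ μB :=
    TensorProduct.ext' fun x b => by simp [μB, F, mul_smul_comm]
  have h4 : s = F.lTensor (↥I) s' := by
    have hinj : Function.Injective μB := Module.Flat.iff_lift_lsmul_comp_subtype_injective.mp hBflat hI
    apply hinj
    rw [← sub_eq_zero, ← map_sub, map_sub]
    have h5 := LinearMap.congr_fun hnat2 s'
    simp only [LinearMap.comp_apply] at h5
    rw [h5, hs', show F c = f * c from rfl, mul_comm, hc, sub_self]
  have hπF : π ∘ₗ F = 0 := by
    apply LinearMap.ext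
    intro b
    simp only [LinearMap.comp_apply, LinearMap.zero_apply]
    have hfb : f * b ∈ J := Ideal.mul_mem_right b _ (Ideal.subset_span rfl)
    exact Ideal.Quotient.eq_zero_iff_mem.mpr hfb
  rw [h4, ← LinearMap.comp_apply, ← LinearMap.lTensor_comp, hπF, LinearMap.lTensor_zero,
    LinearMap.zero_apply]

theorem powerSeries_quotient_flat
    (A : Type*) [CommRing A] [IsLocalRing A] [IsNoetherianRing A]
    (n : ℕ) (hn : 1 ≤ n) (T : Fin n → ℕ) (hT : T ≠ 0)
    (G : MvPowerSeries (Fin n) A)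
    (hG : ∀ I : Fin n →₀ ℕ, coeff I G ∈ IsLocalRing.maximalIdeal A) :
    Module.Flat A
      (MvPowerSeries (Fin n) A ⧸
        Ideal.span {(∏ i, (X i : MvPowerSeries (Fin n) A) ^ T i) - G}) := by
  have hmono : (∏ i, (X i : MvPowerSeries (Fin n) A) ^ T i)
      = MvPowerSeries.monomial (∑ i, Finsupp.single i (T i)) 1 := by
    rw [show (∏ i, (X i : MvPowerSeries (Fin n) A) ^ T i)
        = ∏ i, MvPowerSeries.monomial (Finsupp.single i (T i)) 1
      from Finset.prod_congr rfl fun i _ => MvPowerSeries.X_pow_eq i (T i)]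
    exact prod_monomial_one _ _
  rw [hmono]
  exact quotient_flat_aux A (Fin n) _ G hG
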